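/- Let a < b, δ > 0, and φ ∈ C¹([a−δ, b+δ], ℝ) with φ|_{[a,b]} ∈ H_{[a,b]}. Then there exists γ ∈ (0, δ) such that for all real c, d with |a − c| < γ and |b − d| < γ and every ψ ∈ C¹([c,d], ℝ) (not identically zero) with sup_{s∈[c,d]} |ψ(s) − φ(s)| + sup_{s∈[c,d]} |ψ′(s) − φ′(s)| < γ, one has V(ψ,[c,d]) = V(φ,[a,b]). -/

import Mathlib

open Set

/-- The set of integers `k ≥ 1` such that `φ` has `k` sign changes witnessed by
points `s⁰ < s¹ < ⋯ < sᵏ` in `[a,b]` with `φ(sⁱ⁻¹)·φ(sⁱ) < 0`. -/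
def scSet (φ : ℝ → ℝ) (a b : ℝ) : Set ℕ :=
  {k | 1 ≤ k ∧ ∃ s : ℕ → ℝ, (∀ i, i ≤ k → s i ∈ Set.Icc a b) ∧
    (∀ i, i < k → s i < s (i + 1)) ∧
    (∀ i, 1 ≤ i → i ≤ k → φ (s (i - 1)) * φ (s i) < 0)}

open Classical in
/-- The sign-change counting function `sc(φ,[a,b])` with values in `ℕ∞`. -/
noncomputable def sc (φ : ℝ → ℝ) (a b : ℝ) : ℕ∞ :=
  if (∀ s ∈ Set.Icc a b, 0 ≤ φ s) ∨ (∀ s ∈ Set.Icc a b, φ s ≤ 0) then 0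
  else sSup ((fun n : ℕ => (n : ℕ∞)) '' scSet φ a b)

open Classical in
/-- The discrete Lyapunov function `V(φ,[a,b])`: equals `sc(φ,[a,b])` if the latter
is odd or infinite, and `sc(φ,[a,b]) + 1` otherwise. -/
noncomputable def V (φ : ℝ → ℝ) (a b : ℝ) : ℕ∞ :=
  if ∃ n : ℕ, sc φ a b = (n : ℕ∞) ∧ Even n then sc φ a b + 1 else sc φ a b

lemma same_sign_of_close {u v : ℝ} (h : |u - v| < |v|) : 0 < u * v := by
  rcases lt_trichotomy v 0 with hv | hv | hv
  · have : u < 0 := by cases abs_cases (u - v) <;> cases abs_cases v <;> nlinarith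
    exact mul_pos_of_neg_of_neg this hv
  · simp [hv] at h; exact absurd h (by simp)
  · have : 0 < u := by cases abs_cases (u - v) <;> cases abs_cases v <;> nlinarith
    exact mul_pos this hv

lemma smt_pp {x y z : ℝ} (h1 : 0 < x * y) (h2 : 0 < y * z) : 0 < x * z := by
  rcases mul_pos_iff.mp h1 with ⟨hx, hy⟩ | ⟨hx, hy⟩ <;>
    rcases mul_pos_iff.mp h2 with ⟨hy', hz⟩ | ⟨hy', hz⟩ <;> nlinarith

lemma smt_pn {x y z : ℝ} (h1 : 0 < x * y) (h2 : y * z < 0) : x * z < 0 := by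
  rcases mul_pos_iff.mp h1 with ⟨hx, hy⟩ | ⟨hx, hy⟩ <;>
    rcases mul_neg_iff.mp h2 with ⟨hy', hz⟩ | ⟨hy', hz⟩ <;> nlinarith

lemma smt_np {x y z : ℝ} (h1 : x * y < 0) (h2 : 0 < y * z) : x * z < 0 := by
  rcases mul_neg_iff.mp h1 with ⟨hx, hy⟩ | ⟨hx, hy⟩ <;>
    rcases mul_pos_iff.mp h2 with ⟨hy', hz⟩ | ⟨hy', hz⟩ <;> nlinarith

lemma smt_nn {x y z : ℝ} (h1 : x * y < 0) (h2 : y * z < 0) : 0 < x * z := by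
  rcases mul_neg_iff.mp h1 with ⟨hx, hy⟩ | ⟨hx, hy⟩ <;>
    rcases mul_neg_iff.mp h2 with ⟨hy', hz⟩ | ⟨hy', hz⟩ <;> nlinarith

lemma sign_const_of_ne_zero (φ : ℝ → ℝ) {u v : ℝ} (huv : u ≤ v)
    (hc : ContinuousOn φ (Set.Icc u v)) (h : ∀ s ∈ Set.Icc u v, φ s ≠ 0) :
    0 < φ u * φ v := by
  apply mul_pos_iff.mpr
  have hu := h u (Set.left_mem_Icc.2 huv)
  have hv := h v (Set.right_mem_Icc.2 huv)
  rcases lt_or_gt_of_ne hu with hu' | hu' <;> rcases lt_or_gt_of_ne hv with hv' | hv'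
  · exact Or.inr ⟨hu', hv'⟩
  · exfalso
    obtain ⟨w, hw, hw0⟩ := intermediate_value_Ioo huv hc (⟨hu', hv'⟩ : (0:ℝ) ∈ Set.Ioo (φ u) (φ v))
    exact h w (Set.Ioo_subset_Icc_self hw) hw0
  · exfalso
    obtain ⟨w, hw, hw0⟩ := intermediate_value_Ioo' huv hc (⟨hv', hu'⟩ : (0:ℝ) ∈ Set.Ioo (φ v) (φ u))
    exact h w (Set.Ioo_subset_Icc_self hw) hw0
  · exact Or.inl ⟨hu', hv'⟩

lemma exists_zero_between (ψ : ℝ → ℝ) {u v : ℝ} (h : u < v)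
    (hc : ContinuousOn ψ (Set.Icc u v)) (hs : ψ u * ψ v < 0) :
    ∃ w ∈ Set.Ioo u v, ψ w = 0 := by
  rcases mul_neg_iff.mp hs with ⟨h1, h2⟩ | ⟨h1, h2⟩
  · obtain ⟨w, hw, hw0⟩ := intermediate_value_Ioo' h.le hc (⟨h2, h1⟩ : (0:ℝ) ∈ Set.Ioo (ψ v) (ψ u))
    exact ⟨w, hw, hw0⟩
  · obtain ⟨w, hw, hw0⟩ := intermediate_value_Ioo h.le hc (⟨h1, h2⟩ : (0:ℝ) ∈ Set.Ioo (ψ u) (ψ v))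
    exact ⟨w, hw, hw0⟩

lemma alt_sign (f : ℕ → ℝ) (h0 : f 0 ≠ 0) :
    ∀ n, (∀ j, 1 ≤ j → j ≤ n → f (j-1) * f j < 0) →
      (Even n → 0 < f 0 * f n) ∧ (¬ Even n → f 0 * f n < 0) := by
  intro n
  induction n with
  | zero => intro _; exact ⟨fun _ => mul_self_pos.mpr h0, fun h => absurd Even.zero h⟩
  | succ m ih =>
    intro h
    have hm := ih (fun j h1 h2 => h j h1 (h2.trans (Nat.le_succ m)))
    have hlast : f m * f (m+1) < 0 := by
      have := h (m+1) (Nat.le_add_left 1 m) le_rfl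
      simpa using this
    have hfm : f m ≠ 0 := by rintro h'; rw [h'] at hlast; simp at hlast
    constructor
    · intro he
      have : ¬ Even m := by simpa [Nat.even_add_one] using he
      have h1 := hm.2 this
      nlinarith [sq_nonneg (f m)]
    · intro he
      have : Even m := by simpa [Nat.even_add_one] using he
      have h1 := hm.1 this
      nlinarith [sq_nonneg (f m)]

lemma chain_mono (s : ℕ → ℝ) (k : ℕ) (h : ∀ i, i < k → s i < s (i+1)) :
    ∀ i j, i < j → j ≤ k → s i < s j := by
  intro i j hij hjk
  induction j with
  | zero => omega
  | succ m ih =>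
    rcases Nat.lt_or_ge i m with h' | h'
    · exact (ih h' (by omega)).trans (h m (by omega))
    · have : i = m := by omega
      subst this; exact h i (by omega)

lemma flip_lemma (φ : ℝ → ℝ) {z l : ℝ} (h : HasDerivAt φ l z) (hz : φ z = 0) (hl : l ≠ 0) :
    ∃ η > 0, ∀ s, s ≠ z → |s - z| < η → 0 < φ s * (l * (s - z)) := by
  have hs : Filter.Tendsto (slope φ z) (nhdsWithin z {z}ᶜ) (nhds l) :=
    hasDerivAt_iff_tendsto_slope.mp h
  have hev : ∀ᶠ s in nhdsWithin z {z}ᶜ, |slope φ z s - l| < |l| := by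
    have := hs (Metric.ball_mem_nhds l (abs_pos.mpr hl))
    filter_upwards [this] with s hs'
    simpa [Real.dist_eq] using hs'
  obtain ⟨η, hη, hball⟩ := Metric.mem_nhdsWithin_iff.mp hev
  refine ⟨η, hη, fun s hne hdist => ?_⟩
  have h1 : |slope φ z s - l| < |l| :=
    hball ⟨by simpa [Real.dist_eq] using hdist, hne⟩
  have h2 : 0 < slope φ z s * l := same_sign_of_close h1
  have h3 : slope φ z s = φ s / (s - z) := by simp [slope, hz, vsub_eq_sub]; ring
  have hsz : s - z ≠ 0 := sub_ne_zero.mpr hne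
  rw [h3] at h2
  have : 0 < (φ s / (s - z)) * l * (s - z)^2 := by positivity
  calc (0:ℝ) < (φ s / (s - z)) * l * (s - z)^2 := this
    _ = φ s * (l * (s - z)) := by field_simp

lemma exists_deriv_zero (ψ ψ' : ℝ → ℝ) {c d u v : ℝ}
    (hder : ∀ s ∈ Set.Icc c d, HasDerivWithinAt ψ (ψ' s) (Set.Icc c d) s)
    (hu : u ∈ Set.Icc c d) (hv : v ∈ Set.Icc c d) (huv : u < v)
    (h0u : ψ u = 0) (h0v : ψ v = 0) : ∃ ξ ∈ Set.Ioo u v, ψ' ξ = 0 := by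
  have hcont : ContinuousOn ψ (Set.Icc u v) := by
    intro x hx
    exact ((hder x ⟨hu.1.trans hx.1, hx.2.trans hv.2⟩).continuousWithinAt).mono
      (Set.Icc_subset_Icc hu.1 hv.2)
  have hderiv : ∀ x ∈ Set.Ioo u v, HasDerivAt ψ (ψ' x) x := by
    intro x hx
    have hx' : x ∈ Set.Icc c d := ⟨hu.1.trans hx.1.le, hx.2.le.trans hv.2⟩
    have : Set.Icc c d ∈ nhds x :=
      Icc_mem_nhds (lt_of_le_of_lt hu.1 hx.1) (lt_of_lt_of_le hx.2 hv.2)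
    exact (hder x hx').hasDerivAt this
  obtain ⟨ξ, hξ, hslope⟩ := exists_hasDerivAt_eq_slope ψ ψ' huv hcont hderiv
  exact ⟨ξ, hξ, by rw [hslope, h0u, h0v]; simp⟩

lemma chain_zeros (ψ : ℝ → ℝ) {c d : ℝ} (hcont : ContinuousOn ψ (Set.Icc c d))
    {k : ℕ} {s : ℕ → ℝ} (hmem : ∀ i, i ≤ k → s i ∈ Set.Icc c d)
    (hmono : ∀ i, i < k → s i < s (i+1))
    (hsign : ∀ i, 1 ≤ i → i ≤ k → ψ (s (i-1)) * ψ (s i) < 0) :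
    ∃ u : ℕ → ℝ, (∀ i, 1 ≤ i → i ≤ k → (u i ∈ Set.Ioo (s (i-1)) (s i) ∧ ψ (u i) = 0)) ∧
      (∀ i j, 1 ≤ i → i < j → j ≤ k → u i < u j) := by
  have hex : ∀ i, ∃ w, 1 ≤ i → i ≤ k → w ∈ Set.Ioo (s (i-1)) (s i) ∧ ψ w = 0 := by
    intro i
    by_cases h : 1 ≤ i ∧ i ≤ k
    · have hlt : s (i-1) < s i := by
        have := hmono (i-1) (by omega)
        have hi : i - 1 + 1 = i := by omega
        rwa [hi] at this
      have hsub : Set.Icc (s (i-1)) (s i) ⊆ Set.Icc c d :=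
        Set.Icc_subset_Icc (hmem (i-1) (by omega)).1 (hmem i h.2).2
      obtain ⟨w, hw, hw0⟩ := exists_zero_between ψ hlt (hcont.mono hsub) (hsign i h.1 h.2)
      exact ⟨w, fun _ _ => ⟨hw, hw0⟩⟩
    · exact ⟨0, fun h1 h2 => absurd ⟨h1, h2⟩ h⟩
  choose u hu using hex
  refine ⟨u, fun i h1 h2 => hu i h1 h2, ?_⟩
  intro i j h1 hij hjk
  have hui := (hu i h1 (by omega)).1.2
  have huj := (hu j (by omega) hjk).1.1
  have hsij : s i ≤ s (j-1) := by
    rcases Nat.eq_or_lt_of_le (by omega : i ≤ j - 1) with h | h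
    · rw [h]
    · exact (chain_mono s k hmono i (j-1) h (by omega)).le
  linarith [hui, huj]

lemma scSet_one_le {ψ : ℝ → ℝ} {c d : ℝ} {k : ℕ} (hk : k ∈ scSet ψ c d) :
    ¬ ((∀ s ∈ Set.Icc c d, 0 ≤ ψ s) ∨ (∀ s ∈ Set.Icc c d, ψ s ≤ 0)) := by
  obtain ⟨hk1, s, hmem, hmono, hsign⟩ := hk
  have h01 : ψ (s 0) * ψ (s 1) < 0 := by simpa using hsign 1 le_rfl hk1
  have h0 : s 0 ∈ Set.Icc c d := hmem 0 (by omega)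
  have h1 : s 1 ∈ Set.Icc c d := hmem 1 hk1
  rcases mul_neg_iff.mp h01 with ⟨hp, hn⟩ | ⟨hn, hp⟩
  · rintro (h | h)
    · exact absurd (h _ h1) (not_le.mpr hn)
    · exact absurd (h _ h0) (not_le.mpr hp)
  · rintro (h | h)
    · exact absurd (h _ h0) (not_le.mpr hn)
    · exact absurd (h _ h1) (not_le.mpr hp)

lemma sc_ge {ψ : ℝ → ℝ} {c d : ℝ} {k : ℕ} (hk : k ∈ scSet ψ c d) :
    (k : ℕ∞) ≤ sc ψ c d := by
  rw [sc, if_neg (scSet_one_le hk)]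
  exact le_sSup ⟨k, hk, rfl⟩

lemma sc_le {ψ : ℝ → ℝ} {c d : ℝ} {N : ℕ} (h : ∀ k ∈ scSet ψ c d, k ≤ N) :
    sc ψ c d ≤ (N : ℕ∞) := by
  rw [sc]
  split
  · exact zero_le
  · apply sSup_le
    rintro x ⟨m, hm, rfl⟩
    simp only []
    exact_mod_cast h m hm

lemma V_of_sc {ψ : ℝ → ℝ} {c d : ℝ} {n : ℕ} (h : sc ψ c d = (n : ℕ∞)) :
    V ψ c d = if Even n then (n : ℕ∞) + 1 else (n : ℕ∞) := by
  rw [V, h]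
  by_cases he : Even n
  · rw [if_pos ⟨n, rfl, he⟩, if_pos he]
  · rw [if_neg, if_neg he]
    rintro ⟨m, hm, hme⟩
    exact he (by rwa [Nat.cast_inj.mp hm])

lemma enat_squeeze {x : ℕ∞} {n : ℕ} (h1 : (n : ℕ∞) ≤ x) (h2 : x ≤ (n : ℕ∞) + 1) :
    x = (n : ℕ∞) ∨ x = (n : ℕ∞) + 1 := by
  have hcast : ((n : ℕ∞) + 1) = ((n + 1 : ℕ) : ℕ∞) := by push_cast; rfl
  rw [hcast] at h2 ⊢
  have hne : x ≠ ⊤ := fun h => by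
    rw [h, top_le_iff] at h2; exact (WithTop.coe_ne_top h2)
  lift x to ℕ using hne
  have h1' : n ≤ x := by exact_mod_cast h1
  have h2' : x ≤ n + 1 := by exact_mod_cast h2
  have : x = n ∨ x = n + 1 := by omega
  rcases this with h | h <;> [left; right] <;> rw [h]

/-- Membership in the regularity class `H_{[a,b]}` for a `C¹` function `φ` with
derivative `φ'`: boundary nondegeneracy and all zeros simple. -/
def Hmem (φ φ' : ℝ → ℝ) (a b : ℝ) : Prop :=
  (φ b ≠ 0 ∨ φ a * φ' b < 0) ∧ (φ a ≠ 0 ∨ φ' a * φ b > 0) ∧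
  ∀ s ∈ Set.Icc a b, φ s = 0 → φ' s ≠ 0

set_option maxHeartbeats 1000000 in
/-- Local constancy of `V` near a regular function: if `φ` is `C¹` on `[a-δ, b+δ]`
with `φ|_{[a,b]} ∈ H_{[a,b]}`, then there is `γ ∈ (0,δ)` such that
`V(ψ,[c,d]) = V(φ,[a,b])` for all `C¹` functions `ψ` on `[c,d]` that are
`γ`-close to `φ` in the `C¹` sense, provided `|a - c| < γ` and `|b - d| < γ`. -/
theorem V_locally_constant_near_regular
    (a b δ : ℝ) (hab : a < b) (hδ : 0 < δ)
    (φ φ' : ℝ → ℝ)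
    (hφ_deriv : ∀ s ∈ Set.Icc (a - δ) (b + δ),
      HasDerivWithinAt φ (φ' s) (Set.Icc (a - δ) (b + δ)) s)
    (hφ'_cont : ContinuousOn φ' (Set.Icc (a - δ) (b + δ)))
    (hH : Hmem φ φ' a b) :
    ∃ γ : ℝ, 0 < γ ∧ γ < δ ∧
      ∀ c d : ℝ, |a - c| < γ → |b - d| < γ →
        ∀ ψ ψ' : ℝ → ℝ,
          (∀ s ∈ Set.Icc c d, HasDerivWithinAt ψ (ψ' s) (Set.Icc c d) s) →
          ContinuousOn ψ' (Set.Icc c d) →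
          (∃ s ∈ Set.Icc c d, ψ s ≠ 0) →
          (⨆ s : Set.Icc c d, |ψ (s : ℝ) - φ (s : ℝ)|) +
            (⨆ s : Set.Icc c d, |ψ' (s : ℝ) - φ' (s : ℝ)|) < γ →
          V ψ c d = V φ a b := by
  classical
  obtain ⟨hH1, hH2, hH3⟩ := hH
  have habK : Set.Icc a b ⊆ Set.Icc (a - δ) (b + δ) :=
    Set.Icc_subset_Icc (by linarith) (by linarith)
  have hKmem : ∀ s ∈ Set.Icc a b, Set.Icc (a - δ) (b + δ) ∈ nhds s := fun s hs =>
    Icc_mem_nhds (by linarith [hs.1]) (by linarith [hs.2])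
  have hφcont : ContinuousOn φ (Set.Icc (a - δ) (b + δ)) :=
    fun s hs => (hφ_deriv s hs).continuousWithinAt
  have hφcontab : ContinuousOn φ (Set.Icc a b) := hφcont.mono habK
  have hφD : ∀ s ∈ Set.Icc a b, HasDerivAt φ (φ' s) s := fun s hs =>
    (hφ_deriv s (habK hs)).hasDerivAt (hKmem s hs)
  -- finiteness of the zero set of φ on [a,b]
  have hZfin : Set.Finite {s : ℝ | s ∈ Set.Icc a b ∧ φ s = 0} := by
    have hclosed : IsClosed {s : ℝ | s ∈ Set.Icc a b ∧ φ s = 0} := by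
      have : {s : ℝ | s ∈ Set.Icc a b ∧ φ s = 0} = Set.Icc a b ∩ φ ⁻¹' {0} := by
        ext s; simp [Set.mem_inter_iff]
      rw [this]
      exact hφcontab.preimage_isClosed_of_isClosed isClosed_Icc isClosed_singleton
    have hcpt : IsCompact {s : ℝ | s ∈ Set.Icc a b ∧ φ s = 0} :=
      isCompact_Icc.of_isClosed_subset hclosed (fun s hs => hs.1)
    apply hcpt.finite
    rw [isDiscrete_iff_discreteTopology, discreteTopology_subtype_iff]
    intro z hz
    obtain ⟨η, hη, hflip⟩ := flip_lemma φ (hφD z hz.1) hz.2 (hH3 z hz.1 hz.2)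
    rw [Filter.inf_principal_eq_bot]
    rw [Metric.mem_nhdsWithin_iff]
    refine ⟨η, hη, fun s hs => ?_⟩
    obtain ⟨hs1, hs2⟩ := hs
    intro hmem
    have := hflip s hs2 (by simpa [Real.dist_eq] using hs1)
    rw [hmem.2] at this
    simp at this
  set Zf : Finset ℝ := hZfin.toFinset with hZfdef
  have hZfmem : ∀ s, s ∈ Zf ↔ s ∈ Set.Icc a b ∧ φ s = 0 := fun s => by
    rw [hZfdef, Set.Finite.mem_toFinset]; rfl
  set Zint : Finset ℝ := Zf.filter (fun s => s ∈ Set.Ioo a b) with hZintdef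
  set n : ℕ := Zint.card with hndef
  set L : List ℝ := Zint.sort (· ≤ ·) with hLdef
  have hLs : List.Pairwise (· < ·) L := (Finset.sortedLT_sort _).pairwise
  have hLlen : L.length = n := Finset.length_sort _
  have hLmem : ∀ x : ℝ, x ∈ L ↔ x ∈ Set.Icc a b ∧ φ x = 0 ∧ x ∈ Set.Ioo a b := by
    intro x
    rw [hLdef, Finset.mem_sort, hZintdef, Finset.mem_filter, hZfmem]
    tauto
  have hget_mem : ∀ idx : Fin L.length, L.get idx ∈ Set.Ioo a b ∧ φ (L.get idx) = 0 := by
    intro idx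
    have h1 : L.get idx ∈ L := List.get_mem L idx
    rw [hLmem] at h1
    exact ⟨h1.2.2, h1.2.1⟩
  -- the zeros as a function on indices 0..n+1, with a and b appended
  set zfun : ℕ → ℝ := fun i =>
    if i = 0 then a else if h2 : i - 1 < L.length then L.get ⟨i - 1, h2⟩ else b with hzfundef
  have hzfun0 : zfun 0 = a := by simp [hzfundef]
  have hzfunlast : zfun (n+1) = b := by
    rw [hzfundef]
    simp only []
    rw [if_neg (by omega), dif_neg (by omega)]
  have hzmono : ∀ i j, i < j → j ≤ n + 1 → zfun i < zfun j := by
    intro i j hij hj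
    rw [hzfundef]
    simp only []
    by_cases hi0 : i = 0
    · rw [if_pos hi0, if_neg (by omega)]
      split
      · exact (hget_mem _).1.1
      · exact hab
    · rw [if_neg hi0, if_neg (by omega)]
      have hi1 : i - 1 < L.length := by rw [hLlen]; omega
      rw [dif_pos hi1]
      by_cases hjn : j - 1 < L.length
      · rw [dif_pos hjn]
        exact hLs.rel_get_of_lt (by simp [Fin.lt_def]; omega)
      · rw [dif_neg hjn]
        exact (hget_mem _).1.2
  have hzle : ∀ i j, i ≤ j → j ≤ n + 1 → zfun i ≤ zfun j := by
    intro i j hij hj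
    rcases Nat.eq_or_lt_of_le hij with h | h
    · rw [h]
    · exact (hzmono i j h hj).le
  have hzzero : ∀ j, 1 ≤ j → j ≤ n → φ (zfun j) = 0 ∧ zfun j ∈ Set.Ioo a b := by
    intro j h1 h2
    rw [hzfundef]
    simp only []
    rw [if_neg (by omega), dif_pos (by rw [hLlen]; omega)]
    exact ⟨(hget_mem _).2, (hget_mem _).1⟩
  have hzchar : ∀ s, s ∈ Set.Ioo a b → φ s = 0 → ∃ j, 1 ≤ j ∧ j ≤ n ∧ zfun j = s := by
    intro s hIoo h0
    have h1 : s ∈ L := (hLmem s).mpr ⟨Set.Ioo_subset_Icc_self hIoo, h0, hIoo⟩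
    obtain ⟨idx, hidx⟩ := List.mem_iff_get.mp h1
    have hidxn : idx.1 < n := lt_of_lt_of_le idx.2 (le_of_eq hLlen)
    refine ⟨idx.1 + 1, by omega, by omega, ?_⟩
    rw [hzfundef]
    simp only []
    rw [if_neg (by omega), dif_pos (by simpa using idx.2)]
    simpa using hidx
  have hfree : ∀ j, j ≤ n → ∀ s, zfun j < s → s < zfun (j+1) → s ∈ Set.Icc a b → φ s ≠ 0 := by
    intro j hj s hs1 hs2 hIcc h0
    have hsa : a < s := lt_of_le_of_lt (hzfun0 ▸ hzle 0 j (by omega) (by omega)) hs1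
    have hsb : s < b := lt_of_lt_of_le hs2 (hzfunlast ▸ hzle (j+1) (n+1) (by omega) le_rfl)
    obtain ⟨i, hi1, hi2, hieq⟩ := hzchar s ⟨hsa, hsb⟩ h0
    rw [← hieq] at hs1 hs2
    have hji : j < i := by
      by_contra hcon
      exact absurd (hzle i j (by omega) (by omega)) (not_le.mpr hs1)
    have hij : i < j + 1 := by
      by_contra hcon
      exact absurd (hzle (j+1) i (by omega) (by omega)) (not_le.mpr hs2)
    omega
  -- sample points
  set y : ℕ → ℝ := fun j => (zfun j + zfun (j+1)) / 2 with hydef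
  have hy1 : ∀ j, j ≤ n → zfun j < y j ∧ y j < zfun (j+1) := by
    intro j hj
    have := hzmono j (j+1) (by omega) (by omega)
    constructor <;> (rw [hydef]; simp only []; linarith)
  have hyab : ∀ j, j ≤ n → a < y j ∧ y j < b := by
    intro j hj
    constructor
    · exact lt_of_le_of_lt (hzfun0 ▸ hzle 0 j (by omega) (by omega)) (hy1 j hj).1
    · exact lt_of_lt_of_le (hy1 j hj).2 (hzfunlast ▸ hzle (j+1) (n+1) (by omega) le_rfl)
  have hymono : ∀ i j, i < j → j ≤ n → y i < y j := by
    intro i j hij hj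
    calc y i < zfun (i+1) := (hy1 i (by omega)).2
      _ ≤ zfun j := hzle (i+1) j (by omega) (by omega)
      _ < y j := (hy1 j hj).1
  have hyne : ∀ j, j ≤ n → φ (y j) ≠ 0 := fun j hj =>
    hfree j hj (y j) (hy1 j hj).1 (hy1 j hj).2 ⟨(hyab j hj).1.le, (hyab j hj).2.le⟩
  have hyIccab : ∀ j, j ≤ n → y j ∈ Set.Icc a b := fun j hj =>
    ⟨(hyab j hj).1.le, (hyab j hj).2.le⟩
  -- alternation of φ at the sample points
  have halt : ∀ j, 1 ≤ j → j ≤ n → φ (y (j-1)) * φ (y j) < 0 := by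
    intro j hj1 hjn
    obtain ⟨hz0, hzIoo⟩ := hzzero j hj1 hjn
    have hzIcc : zfun j ∈ Set.Icc a b := Set.Ioo_subset_Icc_self hzIoo
    have hl : φ' (zfun j) ≠ 0 := hH3 _ hzIcc hz0
    obtain ⟨η, hη, hflip⟩ := flip_lemma φ (hφD _ hzIcc) hz0 hl
    have hj' : j - 1 + 1 = j := by omega
    have hyj1 : j - 1 ≤ n := by omega
    have hylt : y (j-1) < zfun j := by
      have := (hy1 (j-1) hyj1).2; rwa [hj'] at this
    have hzlty : zfun j < y j := (hy1 j hjn).1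
    set z := zfun j with hzdef
    set p := max ((y (j-1) + z)/2) (z - η/2) with hpdef
    set q := min ((z + y j)/2) (z + η/2) with hqdef
    have hpz : p < z := max_lt (by linarith) (by linarith)
    have hpy : y (j-1) < p := lt_of_lt_of_le (by linarith) (le_max_left _ _)
    have hpd : |p - z| < η := by
      have h1 : z - η/2 ≤ p := le_max_right _ _
      rw [abs_sub_lt_iff]; constructor <;> linarith
    have hqz : z < q := lt_min (by linarith) (by linarith)
    have hqy : q < y j := lt_of_le_of_lt (min_le_left _ _) (by linarith)
    have hqd : |q - z| < η := by
      have h1 : q ≤ z + η/2 := min_le_right _ _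
      rw [abs_sub_lt_iff]; constructor <;> linarith
    have h1 := hflip p (ne_of_lt hpz) hpd
    have h2 := hflip q (ne_of_gt hqz) hqd
    have hpl : φ p * φ' z < 0 := by nlinarith [h1, hpz]
    have hql : 0 < φ' z * φ q := by nlinarith [h2, hqz]
    have hpq : φ p * φ q < 0 := smt_np hpl hql
    have hA : 0 < φ (y (j-1)) * φ p := by
      apply sign_const_of_ne_zero φ hpy.le
        (hφcontab.mono (Set.Icc_subset_Icc (hyab (j-1) hyj1).1.le (by linarith [hzIoo.2])))
      intro s hs
      refine hfree (j-1) hyj1 s (lt_of_lt_of_le (hy1 (j-1) hyj1).1 hs.1) ?_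
        ⟨(hyab (j-1) hyj1).1.le.trans hs.1, hs.2.trans (by linarith [hzIoo.2])⟩
      rw [hj']
      exact lt_of_le_of_lt hs.2 hpz
    have hB : 0 < φ q * φ (y j) := by
      apply sign_const_of_ne_zero φ hqy.le
        (hφcontab.mono (Set.Icc_subset_Icc (by linarith [hzIoo.1]) (hyab j hjn).2.le))
      intro s hs
      exact hfree j hjn s (lt_of_lt_of_le hqz hs.1) (lt_of_le_of_lt hs.2 (hy1 j hjn).2)
        ⟨le_trans (by linarith [hzIoo.1]) hs.1, hs.2.trans (hyab j hjn).2.le⟩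
    exact smt_np (smt_pn hA hpq) hB
  -- parity in the endpoint-zero cases
  have hEvenB : φ b = 0 → Even n := by
    intro hb0
    have hbIcc : b ∈ Set.Icc a b := Set.right_mem_Icc.mpr hab.le
    have haL : φ a * φ' b < 0 := by
      rcases hH1 with h | h
      · exact absurd hb0 h
      · exact h
    have ha0 : φ a ≠ 0 := fun h => by rw [h, zero_mul] at haL; exact lt_irrefl 0 haL
    have hl : φ' b ≠ 0 := hH3 b hbIcc hb0
    obtain ⟨η, hη, hflip⟩ := flip_lemma φ (hφD b hbIcc) hb0 hl
    have hyn : y n < b := (hyab n le_rfl).2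
    set w := max ((y n + b)/2) (b - η/2) with hwdef
    have hwb : w < b := max_lt (by linarith) (by linarith)
    have hwy : y n < w := lt_of_lt_of_le (by linarith) (le_max_left _ _)
    have hwd : |w - b| < η := by
      have h1 : b - η/2 ≤ w := le_max_right _ _
      rw [abs_sub_lt_iff]; constructor <;> linarith
    have h1 := hflip w (ne_of_lt hwb) hwd
    have hwl : φ w * φ' b < 0 := by nlinarith [h1, hwb]
    have h2 : 0 < φ (y n) * φ w := by
      apply sign_const_of_ne_zero φ hwy.le
        (hφcontab.mono (Set.Icc_subset_Icc (hyab n le_rfl).1.le hwb.le))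
      intro s hs
      exact hfree n le_rfl s (lt_of_lt_of_le (hy1 n le_rfl).1 hs.1)
        (by rw [hzfunlast]; exact lt_of_le_of_lt hs.2 hwb)
        ⟨(hyab n le_rfl).1.le.trans hs.1, hs.2.trans hwb.le⟩
    have h3 : 0 < φ a * φ (y 0) := by
      apply sign_const_of_ne_zero φ (hyab 0 (by omega)).1.le
        (hφcontab.mono (Set.Icc_subset_Icc le_rfl (hyab 0 (by omega)).2.le))
      intro s hs h0
      rcases eq_or_lt_of_le hs.1 with h | h
      · exact ha0 (h ▸ h0)
      · exact hfree 0 (by omega) s (hzfun0 ▸ h) (lt_of_le_of_lt hs.2 (hy1 0 (by omega)).2)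
          ⟨hs.1, hs.2.trans (hyab 0 (by omega)).2.le⟩ h0
    by_contra hodd
    have h4 := (alt_sign (fun j => φ (y j)) (hyne 0 (by omega)) n halt).2 hodd
    have h5 : φ a * φ (y n) < 0 := smt_pn h3 h4
    have h6 : φ a * φ w < 0 := smt_np h5 h2
    have h7 : 0 < φ a * φ' b := smt_nn h6 hwl
    linarith
  have hEvenA : φ a = 0 → Even n := by
    intro ha0
    have haIcc : a ∈ Set.Icc a b := Set.left_mem_Icc.mpr hab.le
    have hbL : φ' a * φ b > 0 := by
      rcases hH2 with h | h
      · exact absurd ha0 h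
      · exact h
    have hb0 : φ b ≠ 0 := fun h => by rw [h, mul_zero] at hbL; exact lt_irrefl 0 hbL
    have hl : φ' a ≠ 0 := hH3 a haIcc ha0
    obtain ⟨η, hη, hflip⟩ := flip_lemma φ (hφD a haIcc) ha0 hl
    have hy0 : a < y 0 := (hyab 0 (by omega)).1
    set w := min ((a + y 0)/2) (a + η/2) with hwdef
    have haw : a < w := lt_min (by linarith) (by linarith)
    have hwy : w < y 0 := lt_of_le_of_lt (min_le_left _ _) (by linarith)
    have hwd : |w - a| < η := by
      have h1 : w ≤ a + η/2 := min_le_right _ _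
      rw [abs_sub_lt_iff]; constructor <;> linarith
    have h1 := hflip w (ne_of_gt haw) hwd
    have hwl : 0 < φ' a * φ w := by nlinarith [h1, haw]
    have h2 : 0 < φ w * φ (y 0) := by
      apply sign_const_of_ne_zero φ hwy.le
        (hφcontab.mono (Set.Icc_subset_Icc haw.le (hyab 0 (by omega)).2.le))
      intro s hs
      exact hfree 0 (by omega) s (hzfun0 ▸ lt_of_lt_of_le haw hs.1)
        (lt_of_le_of_lt hs.2 (hy1 0 (by omega)).2)
        ⟨(haw.le).trans hs.1, hs.2.trans (hyab 0 (by omega)).2.le⟩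
    have h3 : 0 < φ (y n) * φ b := by
      apply sign_const_of_ne_zero φ (hyab n le_rfl).2.le
        (hφcontab.mono (Set.Icc_subset_Icc (hyab n le_rfl).1.le le_rfl))
      intro s hs h0
      rcases eq_or_lt_of_le hs.2 with h | h
      · exact hb0 (h ▸ h0)
      · exact hfree n le_rfl s (lt_of_lt_of_le (hy1 n le_rfl).1 hs.1)
          (by rw [hzfunlast]; exact h) ⟨(hyab n le_rfl).1.le.trans hs.1, hs.2⟩ h0
    by_contra hodd
    have h4 := (alt_sign (fun j => φ (y j)) (hyne 0 (by omega)) n halt).2 hodd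
    have h5 : 0 < φ' a * φ (y 0) := smt_pp hwl h2
    have h6 : φ' a * φ (y n) < 0 := smt_pn h5 h4
    have h7 : φ' a * φ b < 0 := smt_np h6 h3
    linarith
  -- cardinality of the full zero set
  have hQmem : ∀ s ∈ Zf.filter (fun s => ¬ s ∈ Set.Ioo a b),
      (s = a ∧ φ a = 0) ∨ (s = b ∧ φ b = 0) := by
    intro s hs
    rw [Finset.mem_filter] at hs
    obtain ⟨hsZ, hsn⟩ := hs
    obtain ⟨⟨ha', hb'⟩, h0⟩ := (hZfmem s).mp hsZ
    rcases eq_or_lt_of_le ha' with h | h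
    · exact Or.inl ⟨h.symm, h ▸ h0⟩
    rcases eq_or_lt_of_le hb' with h' | h'
    · exact Or.inr ⟨h', h' ▸ h0⟩
    · exact absurd ⟨h, h'⟩ hsn
  have hcardsplit : Zint.card + (Zf.filter (fun s => ¬ s ∈ Set.Ioo a b)).card = Zf.card := by
    rw [hZintdef]
    exact Finset.card_filter_add_card_filter_not (fun s => s ∈ Set.Ioo a b)
  have hcard0 : φ a ≠ 0 → φ b ≠ 0 → Zf.card = n := by
    intro ha0 hb0
    have : Zf.filter (fun s => ¬ s ∈ Set.Ioo a b) = ∅ := by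
      apply Finset.eq_empty_of_forall_notMem
      intro s hs
      rcases hQmem s hs with ⟨_, h⟩ | ⟨_, h⟩
      · exact ha0 h
      · exact hb0 h
    rw [this, Finset.card_empty] at hcardsplit
    omega
  have hcard1a : φ a = 0 → Zf.card = n + 1 := by
    intro ha0
    have hb0 : φ b ≠ 0 := by
      rcases hH2 with h | h
      · exact absurd ha0 h
      · exact fun hb => by rw [hb, mul_zero] at h; exact lt_irrefl 0 h
    have : Zf.filter (fun s => ¬ s ∈ Set.Ioo a b) = {a} := by
      apply Finset.ext
      intro s
      rw [Finset.mem_singleton]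
      constructor
      · intro hs
        rcases hQmem s hs with ⟨h, _⟩ | ⟨_, h⟩
        · exact h
        · exact absurd h hb0
      · intro hs
        rw [hs, Finset.mem_filter]
        exact ⟨(hZfmem a).mpr ⟨Set.left_mem_Icc.mpr hab.le, ha0⟩, fun h => lt_irrefl a h.1⟩
    rw [this, Finset.card_singleton] at hcardsplit
    omega
  have hcard1b : φ b = 0 → Zf.card = n + 1 := by
    intro hb0
    have ha0 : φ a ≠ 0 := by
      rcases hH1 with h | h
      · exact absurd hb0 h
      · exact fun ha => by rw [ha, zero_mul] at h; exact lt_irrefl 0 h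
    have : Zf.filter (fun s => ¬ s ∈ Set.Ioo a b) = {b} := by
      apply Finset.ext
      intro s
      rw [Finset.mem_singleton]
      constructor
      · intro hs
        rcases hQmem s hs with ⟨_, h⟩ | ⟨h, _⟩
        · exact absurd h ha0
        · exact h
      · intro hs
        rw [hs, Finset.mem_filter]
        exact ⟨(hZfmem b).mpr ⟨Set.right_mem_Icc.mpr hab.le, hb0⟩, fun h => lt_irrefl b h.2⟩
    rw [this, Finset.card_singleton] at hcardsplit
    omega
  -- quantitative data
  have hZne0 : ∀ z ∈ Zf, φ' z ≠ 0 := fun z hz => by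
    obtain ⟨hzIcc, hz0⟩ := (hZfmem z).mp hz; exact hH3 z hzIcc hz0
  obtain ⟨κ, hκpos, hκ⟩ : ∃ κ : ℝ, 0 < κ ∧ ∀ z ∈ Zf, 2*κ ≤ |φ' z| := by
    by_cases hne : Zf.Nonempty
    · refine ⟨(Zf.inf' hne fun z => |φ' z|)/2, ?_, ?_⟩
      · have : 0 < Zf.inf' hne fun z => |φ' z| := by
          rw [Finset.lt_inf'_iff]
          exact fun z hz => abs_pos.mpr (hZne0 z hz)
        linarith
      · intro z hz
        have := Finset.inf'_le (fun z => |φ' z|) hz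
        linarith
    · exact ⟨1, one_pos, fun z hz => absurd ⟨z, hz⟩ hne⟩
  obtain ⟨ρ₀, hρ₀pos, hρ₀⟩ := Metric.uniformContinuousOn_iff.mp
    (isCompact_Icc.uniformContinuousOn_of_continuous hφ'_cont) κ hκpos
  set ρ : ℝ := min ρ₀ (δ/2) with hρdef
  have hρpos : 0 < ρ := lt_min hρ₀pos (by linarith)
  have hρδ : ρ ≤ δ/2 := min_le_right _ _
  have hW : ∀ z ∈ Zf, ∀ s ∈ Set.Icc (a-δ) (b+δ), |s - z| < ρ → κ ≤ |φ' s| := by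
    intro z hz s hs hd
    have hzK : z ∈ Set.Icc (a-δ) (b+δ) := habK ((hZfmem z).mp hz).1
    have h1 := hρ₀ s hs z hzK (by rw [Real.dist_eq]; exact hd.trans_le (min_le_left _ _))
    rw [Real.dist_eq] at h1
    have h2 := hκ z hz
    have h3 := abs_sub_abs_le_abs_sub (φ' z) (φ' s)
    rw [abs_sub_comm (φ' z) (φ' s)] at h3
    linarith
  set r : ℝ := ρ/2 with hrdef
  have hrpos : 0 < r := by rw [hrdef]; linarith
  -- margins at the endpoints
  obtain ⟨μa, hμapos, hμa⟩ : ∃ μ' > (0:ℝ), φ a ≠ 0 →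
      ∀ s ∈ Set.Icc (a-δ) (b+δ), |s - a| ≤ μ' → φ s ≠ 0 := by
    by_cases ha0 : φ a = 0
    · exact ⟨1, one_pos, fun h => absurd ha0 h⟩
    · have hca : ContinuousAt φ a :=
        hφcont.continuousAt (hKmem a (Set.left_mem_Icc.mpr hab.le))
      obtain ⟨t, htpos, ht⟩ := Metric.continuousAt_iff.mp hca |φ a| (abs_pos.mpr ha0)
      refine ⟨t/2, by linarith, fun _ s _ hd h0 => ?_⟩
      have h1 := ht (x := s) (by rw [Real.dist_eq]; linarith)
      rw [Real.dist_eq, h0, zero_sub, abs_neg] at h1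
      exact lt_irrefl _ h1
  obtain ⟨μb, hμbpos, hμb⟩ : ∃ μ' > (0:ℝ), φ b ≠ 0 →
      ∀ s ∈ Set.Icc (a-δ) (b+δ), |s - b| ≤ μ' → φ s ≠ 0 := by
    by_cases hb0 : φ b = 0
    · exact ⟨1, one_pos, fun h => absurd hb0 h⟩
    · have hcb : ContinuousAt φ b :=
        hφcont.continuousAt (hKmem b (Set.right_mem_Icc.mpr hab.le))
      obtain ⟨t, htpos, ht⟩ := Metric.continuousAt_iff.mp hcb |φ b| (abs_pos.mpr hb0)
      refine ⟨t/2, by linarith, fun _ s _ hd h0 => ?_⟩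
      have h1 := ht (x := s) (by rw [Real.dist_eq]; linarith)
      rw [Real.dist_eq, h0, zero_sub, abs_neg] at h1
      exact lt_irrefl _ h1
  set μ : ℝ := min (min μa μb) (r/2) with hμdef
  have hμpos : 0 < μ := lt_min (lt_min hμapos hμbpos) (by linarith)
  have hμr : μ ≤ r/2 := min_le_right _ _
  have hμδ : μ ≤ δ := by
    have : r/2 ≤ δ := by rw [hrdef]; linarith
    linarith [hμr]
  have hμa' : μ ≤ μa := le_trans (min_le_left _ _) (min_le_left _ _)
  have hμb' : μ ≤ μb := le_trans (min_le_left _ _) (min_le_right _ _)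
  -- the compact set away from zeros, and the floor ε
  set C : Set ℝ := Set.Icc (a - μ) (b + μ) ∩ ⋂ z ∈ Zf, {s : ℝ | r ≤ |s - z|} with hCdef
  have hCclosed : IsClosed C := by
    apply IsClosed.inter isClosed_Icc
    apply isClosed_biInter
    intro z _
    exact isClosed_le continuous_const (continuous_id.sub continuous_const).abs
  have hCcpt : IsCompact C := isCompact_Icc.of_isClosed_subset hCclosed Set.inter_subset_left
  have hCK : C ⊆ Set.Icc (a-δ) (b+δ) := fun s hs =>
    ⟨by linarith [hs.1.1], by linarith [hs.1.2]⟩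
  have hCne0 : ∀ s ∈ C, φ s ≠ 0 := by
    intro s hs h0
    obtain ⟨hsI, hsZ⟩ := hs
    have hsZ' : ∀ z ∈ Zf, r ≤ |s - z| := fun z hz => Set.mem_iInter₂.mp hsZ z hz
    by_cases hsab : s ∈ Set.Icc a b
    · have hmem : s ∈ Zf := (hZfmem s).mpr ⟨hsab, h0⟩
      have := hsZ' s hmem
      simp at this
      linarith
    · rw [Set.mem_Icc, not_and_or, not_le, not_le] at hsab
      rcases hsab with h | h
      · by_cases ha0 : φ a = 0
        · have hmem : a ∈ Zf := (hZfmem a).mpr ⟨Set.left_mem_Icc.mpr hab.le, ha0⟩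
          have h1 := hsZ' a hmem
          have h2 : |s - a| ≤ μ := by rw [abs_sub_comm, abs_of_pos (by linarith)]; linarith [hsI.1]
          linarith [hμr]
        · exact hμa ha0 s (hCK ⟨hsI, hsZ⟩)
            (by rw [abs_sub_comm, abs_of_pos (by linarith)]; linarith [hsI.1, hμa']) h0
      · by_cases hb0 : φ b = 0
        · have hmem : b ∈ Zf := (hZfmem b).mpr ⟨Set.right_mem_Icc.mpr hab.le, hb0⟩
          have h1 := hsZ' b hmem
          have h2 : |s - b| ≤ μ := by rw [abs_of_pos (by linarith)]; linarith [hsI.2]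
          linarith [hμr]
        · exact hμb hb0 s (hCK ⟨hsI, hsZ⟩)
            (by rw [abs_of_pos (by linarith)]; linarith [hsI.2, hμb']) h0
  obtain ⟨ε, hεpos, hε⟩ : ∃ ε > (0:ℝ), ∀ s ∈ C, ε ≤ |φ s| := by
    rcases C.eq_empty_or_nonempty with h | h
    · exact ⟨1, one_pos, fun s hs => by rw [h] at hs; exact absurd hs (Set.notMem_empty s)⟩
    · obtain ⟨s₀, hs₀, hmin⟩ := hCcpt.exists_isMinOn h ((hφcont.mono hCK).abs)
      exact ⟨|φ s₀|, abs_pos.mpr (hCne0 s₀ hs₀), fun s hs => isMinOn_iff.mp hmin s hs⟩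
  have hcover : ∀ s ∈ Set.Icc (a-μ) (b+μ), |φ s| < ε → ∃ z ∈ Zf, |s - z| < r := by
    intro s hsI hsφ
    by_contra hno
    push_neg at hno
    have : s ∈ C := ⟨hsI, Set.mem_iInter₂.mpr (fun z hz => hno z hz)⟩
    exact absurd (hε s this) (not_le.mpr hsφ)
  -- the floor at the sample points
  obtain ⟨M, hMpos, hM⟩ : ∃ M > (0:ℝ), ∀ j, j ≤ n → M ≤ |φ (y j)| := by
    refine ⟨(Finset.range (n+1)).inf' ⟨0, Finset.mem_range.mpr (by omega)⟩
      (fun j => |φ (y j)|), ?_, ?_⟩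
    · have hpos : 0 < (Finset.range (n+1)).inf' ⟨0, Finset.mem_range.mpr (by omega)⟩
          (fun j => |φ (y j)|) := by
        refine (Finset.lt_inf'_iff _).2 ?_
        intro j hj
        exact abs_pos.mpr (hyne j (Nat.lt_succ_iff.mp (Finset.mem_range.mp hj)))
      exact hpos
    · intro j hj
      exact Finset.inf'_le _ (Finset.mem_range.mpr (by omega))
  set θ : ℝ := min (y 0 - a) (b - y n) with hθdef
  have hθpos : 0 < θ :=
    lt_min (by linarith [(hyab 0 (by omega)).1]) (by linarith [(hyab n le_rfl).2])
  have hθ0 : θ ≤ y 0 - a := min_le_left _ _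
  have hθn : θ ≤ b - y n := min_le_right _ _
  -- the choice of γ
  set γ : ℝ := min (min (min κ ε) (min M θ)) (min (min μ ((b-a)/4)) (δ/2)) with hγdef
  have hγκ : γ ≤ κ := le_trans (min_le_left _ _) (le_trans (min_le_left _ _) (min_le_left _ _))
  have hγε : γ ≤ ε := le_trans (min_le_left _ _) (le_trans (min_le_left _ _) (min_le_right _ _))
  have hγM : γ ≤ M := le_trans (min_le_left _ _) (le_trans (min_le_right _ _) (min_le_left _ _))
  have hγθ : γ ≤ θ := le_trans (min_le_left _ _) (le_trans (min_le_right _ _) (min_le_right _ _))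
  have hγμ : γ ≤ μ := le_trans (min_le_right _ _) (le_trans (min_le_left _ _) (min_le_left _ _))
  have hγba : γ ≤ (b-a)/4 :=
    le_trans (min_le_right _ _) (le_trans (min_le_left _ _) (min_le_right _ _))
  have hγδ2 : γ ≤ δ/2 := le_trans (min_le_right _ _) (min_le_right _ _)
  have hγpos : 0 < γ := by
    apply lt_min (lt_min (lt_min hκpos hεpos) (lt_min hMpos hθpos))
      (lt_min (lt_min hμpos (by linarith)) (by linarith))
  -- value of sc and V for φ
  have hupφ : ∀ k ∈ scSet φ a b, k ≤ n := by
    rintro k ⟨hk1, s, hmem, hmono, hsign⟩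
    obtain ⟨u, hu, humono⟩ := chain_zeros φ hφcontab hmem hmono hsign
    have hmaps : ∀ i ∈ Finset.Icc 1 k, u i ∈ Zint := by
      intro i hi
      rw [Finset.mem_Icc] at hi
      have h1 := (hu i hi.1 hi.2).1
      have h2 := (hu i hi.1 hi.2).2
      have hIoo : u i ∈ Set.Ioo a b :=
        ⟨lt_of_le_of_lt (hmem (i-1) (by omega)).1 h1.1, lt_of_lt_of_le h1.2 (hmem i hi.2).2⟩
      rw [hZintdef, Finset.mem_filter]
      exact ⟨(hZfmem _).mpr ⟨Set.Ioo_subset_Icc_self hIoo, h2⟩, hIoo⟩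
    have hinj : Set.InjOn u ↑(Finset.Icc 1 k) := by
      intro i hi j hj hij
      simp only [Finset.coe_Icc, Set.mem_Icc] at hi hj
      rcases lt_trichotomy i j with h | h | h
      · exact absurd hij (ne_of_lt (humono i j hi.1 h hj.2))
      · exact h
      · exact absurd hij.symm (ne_of_lt (humono j i hj.1 h hi.2))
    have := Finset.card_le_card_of_injOn u hmaps hinj
    rw [Nat.card_Icc] at this
    omega
  have hscφ : sc φ a b = (n : ℕ∞) := by
    apply le_antisymm (sc_le hupφ)
    rcases Nat.eq_zero_or_pos n with h0 | hpos
    · rw [h0, Nat.cast_zero]; exact zero_le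
    · exact sc_ge ⟨hpos, y, hyIccab, fun j hj => hymono j (j+1) (by omega) (by omega), halt⟩
  have hVφ : V φ a b = if Even n then (n : ℕ∞) + 1 else (n : ℕ∞) := V_of_sc hscφ
  -- the conclusion
  refine ⟨γ, hγpos, by linarith, ?_⟩
  intro c d hacγ hbdγ ψ ψ' hψder hψ'cont _ hclose
  rw [abs_sub_lt_iff] at hacγ hbdγ
  have hcd : c < d := by linarith [hγba]
  have hsubμ : Set.Icc c d ⊆ Set.Icc (a-μ) (b+μ) :=
    Set.Icc_subset_Icc (by linarith [hγμ]) (by linarith [hγμ])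
  have hsubK : Set.Icc c d ⊆ Set.Icc (a-δ) (b+δ) :=
    hsubμ.trans (Set.Icc_subset_Icc (by linarith) (by linarith))
  have hψcont : ContinuousOn ψ (Set.Icc c d) :=
    fun s hs => (hψder s hs).continuousWithinAt
  have hclose' : ∀ s ∈ Set.Icc c d, |ψ s - φ s| < γ ∧ |ψ' s - φ' s| < γ := by
    have hne : (Set.Icc c d).Nonempty := Set.nonempty_Icc.mpr hcd.le
    have hinst : Nonempty (Set.Icc c d) := hne.to_subtype
    have hb0 : BddAbove (Set.range fun s : Set.Icc c d => |ψ (s:ℝ) - φ (s:ℝ)|) := by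
      have himg := (isCompact_Icc.image_of_continuousOn
        ((hψcont.sub (hφcont.mono hsubK)).abs)).bddAbove
      rwa [Set.image_eq_range] at himg
    have hb1 : BddAbove (Set.range fun s : Set.Icc c d => |ψ' (s:ℝ) - φ' (s:ℝ)|) := by
      have himg := (isCompact_Icc.image_of_continuousOn
        ((hψ'cont.sub (hφ'_cont.mono hsubK)).abs)).bddAbove
      rwa [Set.image_eq_range] at himg
    intro s hs
    have h0 : |ψ s - φ s| ≤ ⨆ s : Set.Icc c d, |ψ (s:ℝ) - φ (s:ℝ)| :=
      le_ciSup hb0 ⟨s, hs⟩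
    have h1 : |ψ' s - φ' s| ≤ ⨆ s : Set.Icc c d, |ψ' (s:ℝ) - φ' (s:ℝ)| :=
      le_ciSup hb1 ⟨s, hs⟩
    have g0 : (0:ℝ) ≤ ⨆ s : Set.Icc c d, |ψ (s:ℝ) - φ (s:ℝ)| :=
      le_trans (abs_nonneg _) h0
    have g1 : (0:ℝ) ≤ ⨆ s : Set.Icc c d, |ψ' (s:ℝ) - φ' (s:ℝ)| :=
      le_trans (abs_nonneg _) h1
    constructor <;> linarith [hclose]
  have hyIcc_cd : ∀ j, j ≤ n → y j ∈ Set.Icc c d := by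
    intro j hj
    have h0 : y 0 ≤ y j := by
      rcases Nat.eq_zero_or_pos j with h | h
      · rw [h]
      · exact (hymono 0 j h hj).le
    have h1 : y j ≤ y n := by
      rcases Nat.eq_or_lt_of_le hj with h | h
      · rw [h]
      · exact (hymono j n h le_rfl).le
    constructor
    · linarith [hγθ, hθ0]
    · linarith [hγθ, hθn]
  have hmatch : ∀ j, j ≤ n → 0 < ψ (y j) * φ (y j) := fun j hj =>
    same_sign_of_close (lt_of_lt_of_le (hclose' _ (hyIcc_cd j hj)).1 (hγM.trans (hM j hj)))
  have hlow : (n : ℕ∞) ≤ sc ψ c d := by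
    rcases Nat.eq_zero_or_pos n with h0 | hpos
    · rw [h0, Nat.cast_zero]; exact zero_le
    · apply sc_ge
      refine ⟨hpos, y, hyIcc_cd, fun j hj => hymono j (j+1) (by omega) (by omega), ?_⟩
      intro j hj1 hjn
      have t1 := hmatch (j-1) (by omega)
      have t2 := halt j hj1 hjn
      have t3 := hmatch j hjn
      rw [mul_comm] at t3
      exact smt_np (smt_pn t1 t2) t3
  have hupψ : ∀ k ∈ scSet ψ c d, k ≤ Zf.card := by
    rintro k ⟨hk1, s, hmem, hmono, hsign⟩
    obtain ⟨u, hu, humono⟩ := chain_zeros ψ hψcont hmem hmono hsign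
    have huIcc : ∀ i, 1 ≤ i → i ≤ k → u i ∈ Set.Icc c d := fun i h1 h2 =>
      ⟨(hmem (i-1) (by omega)).1.trans (hu i h1 h2).1.1.le,
        (hu i h1 h2).1.2.le.trans (hmem i h2).2⟩
    have hz : ∀ i, ∃ z, 1 ≤ i → i ≤ k → z ∈ Zf ∧ |u i - z| < r := by
      intro i
      by_cases h : 1 ≤ i ∧ i ≤ k
      · have hui := huIcc i h.1 h.2
        have hφsmall : |φ (u i)| < ε := by
          have h0 := (hu i h.1 h.2).2
          have h1 := (hclose' (u i) hui).1
          rw [h0, zero_sub, abs_neg] at h1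
          exact lt_of_lt_of_le h1 hγε
        obtain ⟨z, hz1, hz2⟩ := hcover (u i) (hsubμ hui) hφsmall
        exact ⟨z, fun _ _ => ⟨hz1, hz2⟩⟩
      · exact ⟨0, fun h1 h2 => absurd ⟨h1, h2⟩ h⟩
    choose zm hzm using hz
    have hkey : ∀ i j, 1 ≤ i → i < j → j ≤ k → zm i ≠ zm j := by
      intro i j h1 hij hjk heq
      have huij : u i < u j := humono i j h1 hij hjk
      have hzi := hzm i h1 (by omega)
      have hzj := hzm j (by omega) hjk
      rw [heq] at hzi
      obtain ⟨ξ, hξ, hξ0⟩ := exists_deriv_zero ψ ψ' hψder (huIcc i h1 (by omega))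
        (huIcc j (by omega) hjk) huij (hu i h1 (by omega)).2 (hu j (by omega) hjk).2
      have hξcd : ξ ∈ Set.Icc c d :=
        ⟨(huIcc i h1 (by omega)).1.trans hξ.1.le, hξ.2.le.trans (huIcc j (by omega) hjk).2⟩
      obtain ⟨hziZ, hzid⟩ := hzi
      obtain ⟨hzjZ, hzjd⟩ := hzj
      have hξz : |ξ - zm j| < r := by
        rw [abs_sub_lt_iff] at hzid hzjd ⊢
        constructor
        · linarith [hξ.2, hzjd.1]
        · linarith [hξ.1, hzid.2]
      have hκξ : κ ≤ |φ' ξ| :=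
        hW (zm j) hzjZ ξ (hsubK hξcd) (lt_of_lt_of_le hξz (by rw [hrdef]; linarith))
      have hψ'ξ := (hclose' ξ hξcd).2
      rw [hξ0, zero_sub, abs_neg] at hψ'ξ
      linarith [hγκ]
    have hmaps : ∀ i ∈ Finset.Icc 1 k, zm i ∈ Zf := by
      intro i hi
      rw [Finset.mem_Icc] at hi
      exact (hzm i hi.1 hi.2).1
    have hinj : Set.InjOn zm ↑(Finset.Icc 1 k) := by
      intro i hi j hj hij
      simp only [Finset.coe_Icc, Set.mem_Icc] at hi hj
      rcases lt_trichotomy i j with h | h | h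
      · exact absurd hij (hkey i j hi.1 h hj.2)
      · exact h
      · exact absurd hij.symm (hkey j i hj.1 h hi.2)
    have := Finset.card_le_card_of_injOn zm hmaps hinj
    rw [Nat.card_Icc] at this
    omega
  by_cases ha0 : φ a = 0
  · have hcard := hcard1a ha0
    have heven := hEvenA ha0
    have hup' : sc ψ c d ≤ (n:ℕ∞) + 1 := by
      have h1 := sc_le (N := n+1) (fun k hk => by have := hupψ k hk; omega)
      rwa [Nat.cast_add, Nat.cast_one] at h1
    rcases enat_squeeze hlow hup' with h | h
    · rw [V_of_sc h, hVφ]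
    · have h' : sc ψ c d = ((n+1 : ℕ) : ℕ∞) := by rw [h]; push_cast; rfl
      rw [V_of_sc h', hVφ, if_pos heven, if_neg (by simp [Nat.even_add_one, heven])]
      push_cast; rfl
  · by_cases hb0 : φ b = 0
    · have hcard := hcard1b hb0
      have heven := hEvenB hb0
      have hup' : sc ψ c d ≤ (n:ℕ∞) + 1 := by
        have h1 := sc_le (N := n+1) (fun k hk => by have := hupψ k hk; omega)
        rwa [Nat.cast_add, Nat.cast_one] at h1
      rcases enat_squeeze hlow hup' with h | h
      · rw [V_of_sc h, hVφ]
      · have h' : sc ψ c d = ((n+1 : ℕ) : ℕ∞) := by rw [h]; push_cast; rfl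
        rw [V_of_sc h', hVφ, if_pos heven, if_neg (by simp [Nat.even_add_one, heven])]
        push_cast; rfl
    · have hcard := hcard0 ha0 hb0
      have hscψ : sc ψ c d = (n : ℕ∞) :=
        le_antisymm (sc_le (N := n) (fun k hk => by have := hupψ k hk; omega)) hlow
      rw [V_of_sc hscψ, hVφ]
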